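/- Let g : ℝ → ℝ be continuous and G(x) = ∫₀ˣ |g(y)| dy. Let 0 ≤ r₁ < r₂ ≤ ∞ and let ψ be a C¹ function on (r₁,r₂) with finite energy E((ψ,0); r₁,r₂) = ∫_{r₁}^{r₂} ((ψ'(r))² + g(ψ(r))²/r²) r dr < ∞. Then the limits L₁ := lim_{r↓r₁} G(ψ(r)) and L₂ := lim_{r↑r₂} G(ψ(r)) exist, and 2 |L₂ − L₁| ≤ E((ψ,0); r₁,r₂). -/

import Mathlib

open MeasureTheory Filter Topology Set
open scoped ENNReal

noncomputable section

/-- `G(x) = ∫₀ˣ |g(y)| dy`. -/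
def Gfun (g : ℝ → ℝ) (x : ℝ) : ℝ := ∫ y in (0:ℝ)..x, |g y|

/-- Assumption (A1): `G(x) → ±∞` as `x → ±∞`. -/
def A1 (g : ℝ → ℝ) : Prop := Tendsto (Gfun g) atTop atTop ∧ Tendsto (Gfun g) atBot atBot

/-- Assumption (A2): the zero set `𝒱` of `g` is discrete. -/
def A2 (g : ℝ → ℝ) : Prop :=
  ∀ ℓ : ℝ, g ℓ = 0 → ∃ ε > 0, ∀ x : ℝ, g x = 0 → |x - ℓ| < ε → x = ℓ

/-- Assumption (A3): `g'(ℓ) ∈ {−1,1}` for every zero `ℓ` of `g`. -/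
def A3 (g : ℝ → ℝ) : Prop := ∀ ℓ : ℝ, g ℓ = 0 → deriv g ℓ = 1 ∨ deriv g ℓ = -1

/-- Time derivative `∂ₜψ(t,r)`. -/
def pdt (ψ : ℝ → ℝ → ℝ) (t r : ℝ) : ℝ := deriv (fun s => ψ s r) t
/-- Radial derivative `∂ᵣψ(t,r)`. -/
def pdr (ψ : ℝ → ℝ → ℝ) (t r : ℝ) : ℝ := deriv (fun ρ => ψ t ρ) r
/-- Second time derivative `∂ₜₜψ(t,r)`. -/
def pdtt (ψ : ℝ → ℝ → ℝ) (t r : ℝ) : ℝ := deriv (fun s => pdt ψ s r) t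
/-- Second radial derivative `∂ᵣᵣψ(t,r)`. -/
def pdrr (ψ : ℝ → ℝ → ℝ) (t r : ℝ) : ℝ := deriv (fun ρ => pdr ψ t ρ) r

/-- Energy of a pair `(φ₀, φ₁)` on a set `s ⊆ (0,∞)` of radii:
`∫_s (φ₁² + (∂ᵣφ₀)² + g(φ₀)²/r²) r dr`. -/
def energyOn (g : ℝ → ℝ) (φ₀ φ₁ : ℝ → ℝ) (s : Set ℝ) : ℝ≥0∞ :=
  ∫⁻ r in s, ENNReal.ofReal (((φ₁ r)^2 + (deriv φ₀ r)^2 + (g (φ₀ r))^2 / r^2) * r)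

/-- Squared `H × L²` norm of a pair `(φ₀, φ₁)` on a set `s ⊆ (0,∞)` of radii:
`∫_s (φ₁² + (∂ᵣφ₀)² + φ₀²/r²) r dr`. -/
def HLnormSqOn (φ₀ φ₁ : ℝ → ℝ) (s : Set ℝ) : ℝ≥0∞ :=
  ∫⁻ r in s, ENNReal.ofReal (((φ₁ r)^2 + (deriv φ₀ r)^2 + (φ₀ r)^2 / r^2) * r)

/-- Squared `H` norm of a single function on a set `s ⊆ (0,∞)` of radii. -/
def HnormSqOn (φ : ℝ → ℝ) (s : Set ℝ) : ℝ≥0∞ :=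
  ∫⁻ r in s, ENNReal.ofReal (((deriv φ r)^2 + (φ r)^2 / r^2) * r)

/-- `ψ` is a classical solution of the equivariant wave map equation (WM) on `I × (0,∞)`. -/
def IsWaveMapOn (g : ℝ → ℝ) (ψ : ℝ → ℝ → ℝ) (I : Set ℝ) : Prop :=
  ContDiffOn ℝ 2 (fun p : ℝ × ℝ => ψ p.1 p.2) (I ×ˢ Ioi (0:ℝ)) ∧
  ∀ t ∈ I, ∀ r ∈ Ioi (0:ℝ),
    pdtt ψ t r - pdrr ψ t r - pdr ψ t r / r + g (ψ t r) * deriv g (ψ t r) / r^2 = 0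

/-- `φ` is a classical solution of the linearized equation (LW) with coefficient `k²` on
`I × (0,∞)`. -/
def IsLinWaveOn (k : ℝ) (φ : ℝ → ℝ → ℝ) (I : Set ℝ) : Prop :=
  ContDiffOn ℝ 2 (fun p : ℝ × ℝ => φ p.1 p.2) (I ×ˢ Ioi (0:ℝ)) ∧
  ∀ t ∈ I, ∀ r ∈ Ioi (0:ℝ),
    pdtt φ t r - pdrr φ t r - pdr φ t r / r + k^2 * φ t r / r^2 = 0

/-- A finite-energy classical solution of the linearized equation (LW), defined for all times. -/
def IsFiniteEnergyLinWave (k : ℝ) (φ : ℝ → ℝ → ℝ) : Prop :=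
  IsLinWaveOn k φ univ ∧ ∃ C : ℝ≥0∞, C < ⊤ ∧ ∀ t : ℝ, HLnormSqOn (φ t) (pdt φ t) (Ioi 0) ≤ C

/-- A (possibly constant) harmonic map: a finite-energy `C²` solution of
`Q'' + Q'/r = f(Q)/r²` on `(0,∞)`, together with its limits at `r = 0` and `r = ∞`,
which belong to the zero set `𝒱` of `g`. -/
structure HarmonicMap (g : ℝ → ℝ) where
  Q : ℝ → ℝ
  Q0 : ℝ
  Qinf : ℝ
  smooth : ContDiffOn ℝ 2 Q (Ioi 0)
  eqn : ∀ r ∈ Ioi (0:ℝ), deriv (deriv Q) r + deriv Q r / r = g (Q r) * deriv g (Q r) / r^2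
  finiteEnergy : energyOn g Q (fun _ => 0) (Ioi 0) < ⊤
  lim_zero : Tendsto Q (𝓝[>] (0:ℝ)) (𝓝 Q0)
  lim_infty : Tendsto Q atTop (𝓝 Qinf)
  zero_mem : g Q0 = 0
  infty_mem : g Qinf = 0

/-- The interval `[r₁, r₂] ∩ (0,∞)`, where `r₂` may be `+∞` (an extended real). -/
def sIcc (r₁ : ℝ) (r₂ : EReal) : Set ℝ := {r : ℝ | r₁ ≤ r ∧ (r : EReal) ≤ r₂} ∩ Ioi 0

/-- The open interval `(r₁, r₂)`, where `r₂` may be `+∞` (an extended real). -/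
def sIoo (r₁ : ℝ) (r₂ : EReal) : Set ℝ := {r : ℝ | r₁ < r ∧ (r : EReal) < r₂}

/-- The filter of approach to the (possibly infinite) point `b` within the set `s ⊆ ℝ`. -/
def approach (s : Set ℝ) (b : EReal) : Filter ℝ :=
  Filter.comap (fun r : ℝ => (r : EReal)) (𝓝 b) ⊓ Filter.principal s

end

/-- energy controls the variation of `G∘ψ`: for a `C¹` map `ψ` of
finite energy on `(r₁,r₂)` (with `r₂` possibly `+∞`), the limits of `G(ψ(r))` at both
endpoints exist, and twice their gap is bounded by the energy. -/
theorem energy_controls_G_variation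
    (g : ℝ → ℝ) (hg : Continuous g)
    (r₁ : ℝ) (r₂ : EReal) (h0 : 0 ≤ r₁) (h12 : (r₁ : EReal) < r₂)
    (ψ : ℝ → ℝ) (hψ : ContDiffOn ℝ 1 ψ (sIoo r₁ r₂))
    (hE : energyOn g ψ (fun _ => 0) (sIoo r₁ r₂) < ⊤) :
    ∃ L₁ L₂ : ℝ,
      Tendsto (fun r => Gfun g (ψ r)) (approach (sIoo r₁ r₂) (r₁ : EReal)) (𝓝 L₁) ∧
      Tendsto (fun r => Gfun g (ψ r)) (approach (sIoo r₁ r₂) r₂) (𝓝 L₂) ∧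
      ENNReal.ofReal (2 * |L₂ - L₁|) ≤ energyOn g ψ (fun _ => 0) (sIoo r₁ r₂) := by
  set s : Set ℝ := sIoo r₁ r₂ with hs_def
  have hmem : ∀ r : ℝ, r ∈ s ↔ r₁ < r ∧ (r : EReal) < r₂ := fun r => Iff.rfl
  have hsopen : IsOpen s := by
    have hs_eq : s = Ioi r₁ ∩ ((fun r : ℝ => (r : EReal)) ⁻¹' (Iio r₂)) := by
      ext r; simp [hs_def, sIoo, Set.mem_Ioi, Set.mem_Iio]
    rw [hs_eq]
    exact isOpen_Ioi.inter (isOpen_Iio.preimage continuous_coe_real_ereal)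
  have hsmeas : MeasurableSet s := hsopen.measurableSet
  have hs_pos : ∀ r ∈ s, 0 < r := fun r hr => lt_of_le_of_lt h0 hr.1
  obtain ⟨m, hm1, hm2⟩ := EReal.exists_between_coe_real h12
  have hm1' : r₁ < m := by exact_mod_cast hm1
  have hm : m ∈ s := ⟨hm1', hm2⟩
  have hs_ord : ∀ x ∈ s, ∀ y ∈ s, Icc x y ⊆ s := by
    rintro x hx y hy z ⟨hz1, hz2⟩
    exact ⟨lt_of_lt_of_le hx.1 hz1, lt_of_le_of_lt (EReal.coe_le_coe_iff.2 hz2) hy.2⟩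
  have hsub : ∀ r ∈ s, uIcc m r ⊆ s := by
    intro r hr
    rcases le_total m r with h | h
    · rw [uIcc_of_le h]; exact hs_ord m hm r hr
    · rw [uIcc_of_ge h]; exact hs_ord r hr m hm
  -- the derivative of G ∘ ψ
  set F : ℝ → ℝ := fun r => |g (ψ r)| * deriv ψ r with hF_def
  have hψc : ContinuousOn ψ s := hψ.continuousOn
  have hderiv_cont : ContinuousOn (deriv ψ) s :=
    hψ.continuousOn_deriv_of_isOpen hsopen le_rfl
  have hFcont : ContinuousOn F s :=
    ((hg.comp_continuousOn hψc).abs).mul hderiv_cont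
  -- pointwise bound
  have key : ∀ r ∈ s, 2 * |F r| ≤
      (((fun _ : ℝ => (0:ℝ)) r) ^ 2 + (deriv ψ r) ^ 2 + (g (ψ r)) ^ 2 / r ^ 2) * r := by
    intro r hr
    have hrpos : 0 < r := hs_pos r hr
    set a := deriv ψ r
    set c := g (ψ r)
    have habs : |F r| = |c| * |a| := by
      rw [hF_def]; simp [abs_mul, abs_abs]; rfl
    rw [habs]
    have h1 : 2 * (|c| * |a|) * r ≤ a ^ 2 * r ^ 2 + c ^ 2 := by
      nlinarith [sq_nonneg (|a| * r - |c|), sq_abs a, sq_abs c, abs_nonneg a, abs_nonneg c]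
    have h2 : ((0:ℝ) ^ 2 + a ^ 2 + c ^ 2 / r ^ 2) * r = (a ^ 2 * r ^ 2 + c ^ 2) / r := by
      field_simp; ring
    rw [h2, le_div_iff₀ hrpos]
    linarith
  -- the energy bounds the lintegral of 2|F|
  have hEbound : (∫⁻ r in s, ENNReal.ofReal (2 * |F r|)) ≤ energyOn g ψ (fun _ => 0) s := by
    refine lintegral_mono_ae ?_
    filter_upwards [ae_restrict_of_forall_mem hsmeas key] with r hr
    exact ENNReal.ofReal_le_ofReal hr
  -- integrability of F on s
  have hFint : IntegrableOn F s := by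
    refine ⟨hFcont.aestronglyMeasurable hsmeas, ?_⟩
    rw [hasFiniteIntegral_iff_norm]
    refine lt_of_le_of_lt ?_ (lt_of_le_of_lt hEbound hE)
    refine lintegral_mono fun r => ENNReal.ofReal_le_ofReal ?_
    rw [Real.norm_eq_abs]
    nlinarith [abs_nonneg (F r)]
  set f : ℝ → ℝ := s.indicator F with hf_def
  have hf_int : Integrable f := (integrable_indicator_iff hsmeas).2 hFint
  set Φ : ℝ → ℝ := fun x => ∫ t in m..x, f t with hΦ_def
  have hΦcont : Continuous Φ := hf_int.continuous_primitive m
  -- FTC : on s, G∘ψ = G(ψ m) + Φ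
  have hGderiv : ∀ x : ℝ, HasDerivAt (Gfun g) (|g x|) x := by
    intro x
    exact intervalIntegral.integral_hasDerivAt_right (hg.abs.intervalIntegrable _ _)
      hg.abs.stronglyMeasurable.stronglyMeasurableAtFilter hg.abs.continuousAt
  have hψdiff : ∀ t ∈ s, HasDerivAt ψ (deriv ψ t) t := fun t ht =>
    ((hψ.differentiableOn one_ne_zero).differentiableAt (hsopen.mem_nhds ht)).hasDerivAt
  have hhd : ∀ t ∈ s, HasDerivAt (fun r => Gfun g (ψ r)) (F t) t := fun t ht =>
    (hGderiv (ψ t)).comp t (hψdiff t ht)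
  have hFTC : ∀ r ∈ s, Gfun g (ψ r) = Gfun g (ψ m) + Φ r := by
    intro r hr
    have hsub' := hsub r hr
    have h1 : (∫ t in m..r, f t) = ∫ t in m..r, F t :=
      intervalIntegral.integral_congr fun z hz => Set.indicator_of_mem (hsub' hz) F
    have h2 : (∫ t in m..r, F t) = Gfun g (ψ r) - Gfun g (ψ m) :=
      intervalIntegral.integral_eq_sub_of_hasDerivAt (fun t ht => hhd t (hsub' ht))
        ((hFcont.mono hsub').intervalIntegrable)
    have : Φ r = Gfun g (ψ r) - Gfun g (ψ m) := h1.trans h2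
    linarith
  -- the approach filter at a real point is nhdsWithin
  have happroach : ∀ x : ℝ, approach s (x : EReal) = 𝓝[s] x := by
    intro x
    rw [approach, EReal.nhds_coe, comap_map EReal.coe_injective]
    rfl
  -- limit at the left endpoint
  refine ⟨Gfun g (ψ m) + Φ r₁, ?_⟩
  have hleft : Tendsto (fun r => Gfun g (ψ r)) (approach s (r₁ : EReal))
      (𝓝 (Gfun g (ψ m) + Φ r₁)) := by
    rw [happroach]
    have h1 : Tendsto (fun r => Gfun g (ψ m) + Φ r) (𝓝[s] r₁)
        (𝓝 (Gfun g (ψ m) + Φ r₁)) :=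
      (tendsto_const_nhds.add (hΦcont.tendsto r₁)).mono_left nhdsWithin_le_nhds
    refine h1.congr' ?_
    filter_upwards [self_mem_nhdsWithin] with r hr
    exact (hFTC r hr).symm
  -- common final bound, parametrized by the value of |L₂ - L₁| ≤ ∫ |f| over s
  have h2int : Integrable (fun r => 2 * |F r|) (volume.restrict s) := (hFint.abs.const_mul 2)
  have heq : ENNReal.ofReal (∫ r in s, 2 * |F r|) = ∫⁻ r in s, ENNReal.ofReal (2 * |F r|) :=
    ofReal_integral_eq_lintegral_ofReal h2int (ae_of_all _ fun r => by positivity)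
  have habsf : ∀ r ∈ s, |f r| = |F r| := fun r hr => by
    rw [hf_def, Set.indicator_of_mem hr]
  have hintabs : (∫ r in s, |f r|) = ∫ r in s, |F r| :=
    setIntegral_congr_fun hsmeas habsf
  have hfinal : ∀ L₂ : ℝ, |L₂ - (Gfun g (ψ m) + Φ r₁)| ≤ (∫ r in s, |f r|) →
      ENNReal.ofReal (2 * |L₂ - (Gfun g (ψ m) + Φ r₁)|) ≤ energyOn g ψ (fun _ => 0) s := by
    intro L₂ hL
    refine le_trans ?_ (heq ▸ hEbound)
    refine ENNReal.ofReal_le_ofReal ?_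
    rw [hintabs] at hL
    have : (∫ r in s, 2 * |F r|) = 2 * ∫ r in s, |F r| := by
      rw [integral_const_mul]
    rw [this]
    linarith
  -- case split on r₂
  rcases eq_or_ne r₂ ⊤ with rfl | htop
  · -- r₂ = ⊤ : s = Ioi r₁
    have hsIoi : s = Ioi r₁ := by
      ext r; simp [hmem r, Set.mem_Ioi, EReal.coe_lt_top]
    refine ⟨Gfun g (ψ m) + ∫ t in Ioi m, f t, hleft, ?_, ?_⟩
    · have hΦtop : Tendsto Φ atTop (𝓝 (∫ t in Ioi m, f t)) :=
        intervalIntegral_tendsto_integral_Ioi m hf_int.integrableOn tendsto_id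
      have hcomap_le : comap (fun r : ℝ => (r : EReal)) (𝓝 (⊤ : EReal)) ≤ atTop := by
        rw [le_def]
        intro A hA
        obtain ⟨b, hb⟩ := mem_atTop_sets.1 hA
        refine mem_comap.2 ⟨Ioi (b : EReal), isOpen_Ioi.mem_nhds (EReal.coe_lt_top b), ?_⟩
        intro x hx
        exact hb x (le_of_lt (EReal.coe_lt_coe_iff.1 hx))
      have hle : approach s ⊤ ≤ atTop := le_trans inf_le_left hcomap_le
      have h1 : Tendsto (fun r => Gfun g (ψ m) + Φ r) (approach s ⊤)
          (𝓝 (Gfun g (ψ m) + ∫ t in Ioi m, f t)) :=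
        (tendsto_const_nhds.add hΦtop).mono_left hle
      refine h1.congr' ?_
      have hsmem : s ∈ approach s ⊤ := mem_inf_of_right (mem_principal_self s)
      filter_upwards [hsmem] with r hr
      exact (hFTC r hr).symm
    · refine hfinal _ ?_
      have hΦr₁ : Φ r₁ = -∫ t in Ioc r₁ m, f t := by
        show (∫ t in m..r₁, f t) = _
        rw [intervalIntegral.integral_symm, intervalIntegral.integral_of_le hm1'.le]
      have hsplit : (∫ t in Ioi r₁, f t) = (∫ t in Ioc r₁ m, f t) + ∫ t in Ioi m, f t := by
        rw [← setIntegral_union (Ioc_disjoint_Ioi le_rfl) measurableSet_Ioi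
          hf_int.integrableOn hf_int.integrableOn, Ioc_union_Ioi_eq_Ioi hm1'.le]
      have hval : Gfun g (ψ m) + (∫ t in Ioi m, f t) - (Gfun g (ψ m) + Φ r₁)
          = ∫ t in Ioi r₁, f t := by
        rw [hΦr₁, hsplit]; ring
      rw [hval, hsIoi]
      calc |∫ t in Ioi r₁, f t| ≤ ∫ t in Ioi r₁, |f t| := by
            simpa [Real.norm_eq_abs] using
              norm_integral_le_integral_norm (μ := volume.restrict (Ioi r₁)) f
        _ = _ := rfl
  · -- r₂ = b real
    have hbot : r₂ ≠ ⊥ := (lt_trans (EReal.bot_lt_coe r₁) h12).ne'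
    lift r₂ to ℝ using ⟨htop, hbot⟩ with b
    have hb1 : r₁ < b := EReal.coe_lt_coe_iff.1 h12
    have hsIoo : s = Ioo r₁ b := by
      ext r; simp [hmem r, Set.mem_Ioo, EReal.coe_lt_coe_iff]
    refine ⟨Gfun g (ψ m) + Φ b, hleft, ?_, ?_⟩
    · rw [happroach]
      have h1 : Tendsto (fun r => Gfun g (ψ m) + Φ r) (𝓝[s] b)
          (𝓝 (Gfun g (ψ m) + Φ b)) :=
        (tendsto_const_nhds.add (hΦcont.tendsto b)).mono_left nhdsWithin_le_nhds
      refine h1.congr' ?_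
      filter_upwards [self_mem_nhdsWithin] with r hr
      exact (hFTC r hr).symm
    · refine hfinal _ ?_
      have hval : Gfun g (ψ m) + Φ b - (Gfun g (ψ m) + Φ r₁) = ∫ t in r₁..b, f t := by
        have hadd : (∫ t in r₁..m, f t) + ∫ t in m..b, f t = ∫ t in r₁..b, f t :=
          intervalIntegral.integral_add_adjacent_intervals
            hf_int.intervalIntegrable hf_int.intervalIntegrable
        have hΦb : Φ b = ∫ t in m..b, f t := rfl
        have hΦr : Φ r₁ = -∫ t in r₁..m, f t := by
          rw [show Φ r₁ = ∫ t in m..r₁, f t from rfl, intervalIntegral.integral_symm]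
        rw [hΦb, hΦr, ← hadd]; ring
      rw [hval]
      calc |∫ t in r₁..b, f t| ≤ ∫ t in r₁..b, |f t| :=
            intervalIntegral.abs_integral_le_integral_abs hb1.le
        _ = ∫ t in Ioc r₁ b, |f t| := intervalIntegral.integral_of_le hb1.le
        _ = ∫ t in Ioo r₁ b, |f t| := integral_Ioc_eq_integral_Ioo
        _ = ∫ r in s, |f r| := by rw [hsIoo]
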